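/- For every natural number n, ∑_{k=0}^{n} (-1)^{k} (1/(k+4)) · C(n, k) = 6/((n+1)(n+2)(n+3)(n+4)), as rational numbers. -/

import Mathlib

open Finset Nat

lemma euler_aux (n : ℕ) : ∀ m : ℕ,
    ∑ k ∈ Finset.range (n + 1), (-1 : ℚ) ^ k * (1 / (k + m + 1)) * (n.choose k) =
      (n ! : ℚ) * m ! / (n + m + 1)! := by
  induction n with
  | zero =>
    intro m
    have h1 : ((m ! : ℚ)) ≠ 0 := by positivity
    have h2 : ((m : ℚ) + 1) ≠ 0 := by positivity
    rw [Finset.sum_range_one]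
    simp [Nat.factorial_succ]
    field_simp
  | succ n ih =>
    intro m
    set g : ℕ → ℚ := fun k => (-1 : ℚ) ^ k * (1 / (k + m + 1)) * (n.choose k) with hg
    have hsplit : ∑ k ∈ Finset.range (n + 2), (-1 : ℚ) ^ k * (1 / (k + m + 1)) * ((n+1).choose k)
        = (∑ k ∈ Finset.range (n + 1), (-1 : ℚ) ^ (k+1) * (1 / (k + 1 + m + 1)) * ((n+1).choose (k+1)))
          + 1 / (m + 1) := by
      rw [Finset.sum_range_succ']
      simp
    have hpascal : ∀ k ∈ Finset.range (n+1),
        (-1 : ℚ) ^ (k+1) * (1 / (k + 1 + m + 1)) * ((n+1).choose (k+1))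
        = -((-1 : ℚ) ^ k * (1 / (k + ((m:ℚ)+1) + 1)) * (n.choose k)) + g (k+1) := by
      intro k _
      rw [Nat.choose_succ_succ]
      push_cast
      simp only [hg]
      push_cast
      ring
    have hA : ∑ x ∈ Finset.range (n+1), (-1:ℚ)^x * (1/(x+((m:ℚ)+1)+1)) * (n.choose x)
        = (n ! : ℚ) * (m+1)! / (n+m+2)! := by
      have hidx : n + (m+1) + 1 = n + m + 2 := by ring
      have := ih (m+1)
      rw [hidx] at this
      rw [← this]
      apply Finset.sum_congr rfl
      intro k _
      push_cast
      ring
    have hshift : ∑ k ∈ Finset.range (n+1), g (k+1)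
        = ∑ k ∈ Finset.range (n+1), g k + g (n+1) - g 0 := by
      have e1 := Finset.sum_range_succ' g (n+1)
      have e2 := Finset.sum_range_succ g (n+1)
      rw [e2] at e1
      linarith
    have hgn : g (n+1) = 0 := by simp [hg, Nat.choose_succ_self]
    have hg0 : g 0 = 1 / (m + 1) := by simp [hg]
    rw [hsplit, Finset.sum_congr rfl hpascal, Finset.sum_add_distrib, Finset.sum_neg_distrib,
      hA, hshift, hgn, hg0, ih m]
    have hidx2 : (n+1) + m + 1 = n + m + 2 := by ring
    rw [hidx2]
    have e3 : ((n+m+2)! : ℚ) = (n+m+2) * (n+m+1)! := by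
      rw [show n+m+2 = (n+m+1)+1 by ring, Nat.factorial_succ]; push_cast; ring
    have e4 : (((n+1)! : ℚ)) = (n+1) * n ! := by rw [Nat.factorial_succ]; push_cast; ring
    have e5 : (((m+1)! : ℚ)) = (m+1) * m ! := by rw [Nat.factorial_succ]; push_cast; ring
    have hne1 : ((n+m+1)! : ℚ) ≠ 0 := by positivity
    have hne2 : ((n:ℚ)+m+2) ≠ 0 := by positivity
    have hne3 : ((m:ℚ)+1) ≠ 0 := by positivity
    rw [e3, e4, e5]
    field_simp
    ring

theorem euler_case7 (n : ℕ) :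
    ∑ k ∈ Finset.range (n + 1), (-1 : ℚ) ^ k * (1 / (k + 4)) * (n.choose k) =
      6 / ((n + 1) * (n + 2) * (n + 3) * (n + 4)) := by
  have h := euler_aux n 3
  have hconv : ∀ k ∈ Finset.range (n+1),
      (-1 : ℚ) ^ k * (1 / (k + 4)) * (n.choose k)
      = (-1 : ℚ) ^ k * (1 / (k + (3:ℕ) + 1)) * (n.choose k) := by
    intro k _
    push_cast
    ring
  rw [Finset.sum_congr rfl hconv, h]
  have h4 : ((n+3+1)! : ℚ) = (n ! : ℚ) * ((n+1)*(n+2)*(n+3)*(n+4)) := by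
    have : (n+3+1)! = (n+4)*((n+3)*((n+2)*((n+1)*n !))) := by
      simp [Nat.factorial_succ]
      try ring
    rw [this]; push_cast; ring
  rw [h4]
  have hne : (n ! : ℚ) ≠ 0 := by positivity
  have h1 : ((n:ℚ)+1) ≠ 0 := by positivity
  have h2 : ((n:ℚ)+2) ≠ 0 := by positivity
  have h3 : ((n:ℚ)+3) ≠ 0 := by positivity
  have h4' : ((n:ℚ)+4) ≠ 0 := by positivity
  norm_num [show (3:ℕ)! = 6 from rfl]
  field_simp
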